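/- arXiv:2112.06900 — 7 statements merged into one kernel-verified Lean document; each statement's English description precedes it below -/
import Mathlib

section
/- For every θ ∈ [0, π/2] and every C ∈ [0, 1], one has sin²θ·|1 − 2C| + sin(2θ)·√C·√(1 − C) ≤ sin θ. -/
open Real

/-- For every `θ ∈ [0, π/2]` and `C ∈ [0, 1]`,
`sin²θ |1 - 2C| + sin(2θ) √C √(1 - C) ≤ sin θ`. -/
theorem g_le_sin
    (θ C : ℝ) (hθ : θ ∈ Set.Icc 0 (π / 2)) (hC : C ∈ Set.Icc (0 : ℝ) 1) :
    Real.sin θ ^ 2 * |1 - 2 * C|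
      + Real.sin (2 * θ) * Real.sqrt C * Real.sqrt (1 - C)
      ≤ Real.sin θ := by
  obtain ⟨hθ0, hθ1⟩ := hθ
  obtain ⟨hC0, hC1⟩ := hC
  set s := Real.sin θ
  set c := Real.cos θ
  have hs : 0 ≤ s := Real.sin_nonneg_of_nonneg_of_le_pi hθ0 (by linarith [Real.pi_pos])
  have hc : 0 ≤ c := Real.cos_nonneg_of_mem_Icc ⟨by linarith [Real.pi_pos], hθ1⟩
  have hsc : s ^ 2 + c ^ 2 = 1 := Real.sin_sq_add_cos_sq θ
  have h2 : Real.sin (2 * θ) = 2 * s * c := Real.sin_two_mul θ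
  set a := |1 - 2 * C|
  set b := Real.sqrt C * Real.sqrt (1 - C)
  have ha : 0 ≤ a := abs_nonneg _
  have hb : 0 ≤ b := mul_nonneg (Real.sqrt_nonneg _) (Real.sqrt_nonneg _)
  have hab : a ^ 2 + (2 * b) ^ 2 = 1 := by
    have h1 : a ^ 2 = (1 - 2 * C) ^ 2 := sq_abs _
    have h2 : b ^ 2 = C * (1 - C) := by
      rw [mul_pow, Real.sq_sqrt hC0, Real.sq_sqrt (by linarith)]
    nlinarith [h1, h2]
  have key : s * a + c * (2 * b) ≤ 1 := by
    nlinarith [sq_nonneg (s - a), sq_nonneg (c - 2 * b)]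
  calc s ^ 2 * a + Real.sin (2 * θ) * Real.sqrt C * Real.sqrt (1 - C)
      = s * (s * a + c * (2 * b)) := by rw [h2]; ring
    _ ≤ s * 1 := by exact mul_le_mul_of_nonneg_left key hs
    _ = s := mul_one s
end

section
/- For every θ ∈ [0, π/2], the auxiliary function g(C, θ) = sin²θ·|1 − 2C| + sin(2θ)·√C·√(1 − C) attains the value sin θ at C = (1 + sin θ)/2, i.e., g((1 + sin θ)/2, θ) = sin θ; hence the maximum of g(·, θ) over C ∈ [0, 1] equals sin θ. -/
open Real

/-- The auxiliary function `g(C, θ) = sin²θ |1 - 2C| + sin(2θ) √C √(1 - C)`. -/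
noncomputable def gAux (C θ : ℝ) : ℝ :=
  Real.sin θ ^ 2 * |1 - 2 * C| + Real.sin (2 * θ) * Real.sqrt C * Real.sqrt (1 - C)

/-- For every `θ ∈ [0, π/2]`, the auxiliary function
`g(·, θ)` attains the value `sin θ` at `C = (1 + sin θ)/2`, and `sin θ` is the
maximum of `g(·, θ)` over `C ∈ [0, 1]`. -/
theorem g_attains_max
    (θ : ℝ) (hθ : θ ∈ Set.Icc 0 (π / 2)) :
    gAux ((1 + Real.sin θ) / 2) θ = Real.sin θ ∧
      IsGreatest ((fun C => gAux C θ) '' Set.Icc (0 : ℝ) 1) (Real.sin θ) := by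
  obtain ⟨h0, h1⟩ := hθ
  have hs : 0 ≤ Real.sin θ := Real.sin_nonneg_of_nonneg_of_le_pi h0 (h1.trans (by linarith [Real.pi_pos]))
  have hs1 : Real.sin θ ≤ 1 := Real.sin_le_one θ
  have hc : 0 ≤ Real.cos θ := Real.cos_nonneg_of_mem_Icc ⟨by linarith [Real.pi_pos], h1⟩
  have hpyth : Real.sin θ ^ 2 + Real.cos θ ^ 2 = 1 := Real.sin_sq_add_cos_sq θ
  have hval : gAux ((1 + Real.sin θ) / 2) θ = Real.sin θ := by
    unfold gAux
    have h2 : Real.sin (2 * θ) = 2 * Real.sin θ * Real.cos θ := Real.sin_two_mul θ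
    have habs : |1 - 2 * ((1 + Real.sin θ) / 2)| = Real.sin θ := by
      rw [abs_of_nonpos (by linarith)]; ring
    have hsq : Real.sqrt ((1 + Real.sin θ) / 2) * Real.sqrt (1 - (1 + Real.sin θ) / 2)
        = Real.cos θ / 2 := by
      rw [← Real.sqrt_mul (by linarith)]
      have : (1 + Real.sin θ) / 2 * (1 - (1 + Real.sin θ) / 2) = (Real.cos θ / 2) ^ 2 := by
        nlinarith
      rw [this, Real.sqrt_sq (by linarith)]
    rw [habs, h2, mul_assoc, hsq]
    nlinarith
  refine ⟨hval, ⟨⟨(1 + Real.sin θ) / 2, ⟨by linarith, by linarith⟩, hval⟩, ?_⟩⟩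
  rintro y ⟨C, ⟨hC0, hC1⟩, rfl⟩
  simp only
  unfold gAux
  have h2 : Real.sin (2 * θ) = 2 * Real.sin θ * Real.cos θ := Real.sin_two_mul θ
  rw [h2, mul_assoc (2 * Real.sin θ * Real.cos θ)]
  set a := |1 - 2 * C| with ha
  set b := Real.sqrt C * Real.sqrt (1 - C) with hb
  have hb0 : 0 ≤ b := mul_nonneg (Real.sqrt_nonneg _) (Real.sqrt_nonneg _)
  have ha0 : 0 ≤ a := abs_nonneg _
  have hkey : a ^ 2 + 4 * b ^ 2 = 1 := by
    have : b ^ 2 = C * (1 - C) := by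
      rw [hb, mul_pow, Real.sq_sqrt hC0, Real.sq_sqrt (by linarith)]
    rw [this, ha, sq_abs]; ring
  have ht0 : 0 ≤ Real.sin θ * a + 2 * Real.cos θ * b := by positivity
  have ht2 : (Real.sin θ * a + 2 * Real.cos θ * b) ^ 2 ≤ 1 := by
    nlinarith [sq_nonneg (2 * b * Real.sin θ - a * Real.cos θ)]
  have ht1 : Real.sin θ * a + 2 * Real.cos θ * b ≤ 1 := by nlinarith
  nlinarith [mul_le_mul_of_nonneg_left ht1 hs]
end

section
/- For every triple ψ₁, ψ₂, ψ₃ of unit vectors in a complex inner product space E, one has | |⟨ψ₁, ψ₂⟩|² − |⟨ψ₁, ψ₃⟩|² | ≤ sin(arccos|⟨ψ₂, ψ₃⟩|), i.e., |F(ψ₁, ψ₂) − F(ψ₁, ψ₃)| ≤ √(1 − |⟨ψ₂, ψ₃⟩|²). -/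
open scoped InnerProductSpace
open Real

private lemma key_real (x y c s t : ℝ) (hx : 0 ≤ x) (hs : 0 ≤ s)
    (hs2 : s ^ 2 = 1 - c ^ 2) (ht2 : t ^ 2 = 1 - y ^ 2)
    (hxb : x ≤ y * c + s * t) : x ^ 2 - y ^ 2 ≤ s := by
  have hP2 : (s * (1 - 2*y^2) + c * (2*y*t))^2 ≤ 1 := by
    nlinarith [sq_nonneg (c*(1-2*y^2) - s*(2*y*t)), sq_nonneg (1-2*y^2), sq_nonneg y,
      sq_nonneg t, sq_nonneg (s*y), sq_nonneg (c*y), sq_nonneg (y*t)]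
  have hK : s * (1 - 2*y^2) + c * (2*y*t) ≤ 1 := by
    nlinarith [hP2, sq_nonneg (s * (1 - 2*y^2) + c * (2*y*t) - 1)]
  have h2 : x^2 ≤ (y*c + s*t)^2 := by nlinarith
  nlinarith [mul_le_mul_of_nonneg_left hK hs]

private lemma norm_perp_sq {E : Type*} [NormedAddCommGroup E] [InnerProductSpace ℂ E]
    (v w : E) (hv : ‖v‖ = 1) (hw : ‖w‖ = 1) :
    ‖w - ⟪v, w⟫_ℂ • v‖ ^ 2 = 1 - ‖⟪v, w⟫_ℂ‖ ^ 2 := by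
  set a : ℂ := ⟪v, w⟫_ℂ with ha
  have hvv : ⟪v, v⟫_ℂ = 1 := by rw [inner_self_eq_norm_sq_to_K, hv]; norm_num
  have hww : ⟪w, w⟫_ℂ = 1 := by rw [inner_self_eq_norm_sq_to_K, hw]; norm_num
  have h2 : ⟪w - a • v, w - a • v⟫_ℂ = ((1 - ‖a‖ ^ 2 : ℝ) : ℂ) := by
    simp only [inner_sub_sub_self, inner_smul_left, inner_smul_right, hvv, hww, mul_one]
    have hconj : ⟪w, v⟫_ℂ = starRingEnd ℂ a := (inner_conj_symm w v).symm
    rw [hconj, Complex.mul_conj, mul_comm ((starRingEnd ℂ) a) a, Complex.mul_conj,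
      ← Complex.sq_norm]
    push_cast
    ring
  have h3 := (inner_self_eq_norm_sq_to_K (𝕜 := ℂ) (w - a • v)).symm.trans h2
  exact Complex.ofReal_inj.mp (by push_cast at h3 ⊢; exact h3)

private lemma key_ineq {E : Type*} [NormedAddCommGroup E] [InnerProductSpace ℂ E]
    (u v w : E) (hu : ‖u‖ = 1) (hv : ‖v‖ = 1) (hw : ‖w‖ = 1) :
    ‖⟪w, u⟫_ℂ‖ ≤ ‖⟪w, v⟫_ℂ‖ * ‖⟪v, u⟫_ℂ‖ +
      Real.sqrt (1 - ‖⟪v, u⟫_ℂ‖ ^ 2) * Real.sqrt (1 - ‖⟪w, v⟫_ℂ‖ ^ 2) := by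
  set a : ℂ := ⟪v, w⟫_ℂ with ha
  set b : ℂ := ⟪v, u⟫_ℂ with hb
  set w' : E := w - a • v with hw'
  set u' : E := u - b • v with hu'
  have hvv : ⟪v, v⟫_ℂ = 1 := by rw [inner_self_eq_norm_sq_to_K, hv]; norm_num
  have hinner : ⟪w', u'⟫_ℂ = ⟪w, u⟫_ℂ - b * ⟪w, v⟫_ℂ := by
    simp only [hw', hu', inner_sub_left, inner_sub_right, inner_smul_left, inner_smul_right,
      hvv, mul_one, ← ha, ← hb]
    ring
  have hwa : ‖⟪w, v⟫_ℂ‖ = ‖a‖ := by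
    rw [ha, ← inner_conj_symm w v, Complex.norm_conj]
  have hnw : ‖w'‖ = Real.sqrt (1 - ‖⟪w, v⟫_ℂ‖ ^ 2) := by
    rw [hwa, ← norm_perp_sq v w hv hw, Real.sqrt_sq (norm_nonneg _)]
  have hnu : ‖u'‖ = Real.sqrt (1 - ‖⟪v, u⟫_ℂ‖ ^ 2) := by
    have hub : ‖⟪v, u⟫_ℂ‖ = ‖⟪v, u⟫_ℂ‖ := rfl
    rw [← norm_perp_sq v u hv hu, Real.sqrt_sq (norm_nonneg _)]
  have hCS : ‖⟪w', u'⟫_ℂ‖ ≤ ‖w'‖ * ‖u'‖ := by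
    exact norm_inner_le_norm w' u'
  calc ‖⟪w, u⟫_ℂ‖
      = ‖b * ⟪w, v⟫_ℂ + ⟪w', u'⟫_ℂ‖ := by rw [hinner]; ring_nf
    _ ≤ ‖b * ⟪w, v⟫_ℂ‖ + ‖⟪w', u'⟫_ℂ‖ := norm_add_le _ _
    _ ≤ ‖⟪w, v⟫_ℂ‖ * ‖⟪v, u⟫_ℂ‖ +
        Real.sqrt (1 - ‖⟪v, u⟫_ℂ‖ ^ 2) * Real.sqrt (1 - ‖⟪w, v⟫_ℂ‖ ^ 2) := by
        rw [norm_mul, ← hb]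
        rw [hnw, hnu] at hCS
        nlinarith [hCS]

/-- For unit vectors `ψ₁, ψ₂, ψ₃`, the fidelities satisfy
`|F(ψ₁, ψ₂) - F(ψ₁, ψ₃)| ≤ sin(arccos |⟨ψ₂, ψ₃⟩|)`. -/
theorem fidelity_diff_le_sin_arccos
    {E : Type*} [NormedAddCommGroup E] [InnerProductSpace ℂ E]
    (ψ₁ ψ₂ ψ₃ : E) (h₁ : ‖ψ₁‖ = 1) (h₂ : ‖ψ₂‖ = 1) (h₃ : ‖ψ₃‖ = 1) :
    |‖⟪ψ₁, ψ₂⟫_ℂ‖ ^ 2 - ‖⟪ψ₁, ψ₃⟫_ℂ‖ ^ 2|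
      ≤ Real.sin (Real.arccos (‖⟪ψ₂, ψ₃⟫_ℂ‖)) := by
  set x := ‖⟪ψ₁, ψ₂⟫_ℂ‖ with hxdef
  set y := ‖⟪ψ₁, ψ₃⟫_ℂ‖ with hydef
  set c := ‖⟪ψ₂, ψ₃⟫_ℂ‖ with hcdef
  have hx0 : 0 ≤ x := norm_nonneg _
  have hy0 : 0 ≤ y := norm_nonneg _
  have hx1 : x ≤ 1 := by
    rw [hxdef]
    calc ‖⟪ψ₁, ψ₂⟫_ℂ‖ ≤ ‖ψ₁‖ * ‖ψ₂‖ := norm_inner_le_norm _ _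
      _ = 1 := by rw [h₁, h₂]; ring
  have hy1 : y ≤ 1 := by
    rw [hydef]
    calc ‖⟪ψ₁, ψ₃⟫_ℂ‖ ≤ ‖ψ₁‖ * ‖ψ₃‖ := norm_inner_le_norm _ _
      _ = 1 := by rw [h₁, h₃]; ring
  have hc1 : c ≤ 1 := by
    rw [hcdef]
    calc ‖⟪ψ₂, ψ₃⟫_ℂ‖ ≤ ‖ψ₂‖ * ‖ψ₃‖ := norm_inner_le_norm _ _
      _ = 1 := by rw [h₂, h₃]; ring
  have hc0 : 0 ≤ c := norm_nonneg _
  have hsym : ‖⟪ψ₃, ψ₂⟫_ℂ‖ = c := by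
    rw [hcdef, ← inner_conj_symm ψ₂ ψ₃, Complex.norm_conj]
  rw [Real.sin_arccos]
  set s := Real.sqrt (1 - c ^ 2) with hsdef
  have hs0 : 0 ≤ s := Real.sqrt_nonneg _
  have hs2 : s ^ 2 = 1 - c ^ 2 := Real.sq_sqrt (by nlinarith)
  set tx := Real.sqrt (1 - x ^ 2) with htxdef
  set ty := Real.sqrt (1 - y ^ 2) with htydef
  have htx2 : tx ^ 2 = 1 - x ^ 2 := Real.sq_sqrt (by nlinarith)
  have hty2 : ty ^ 2 = 1 - y ^ 2 := Real.sq_sqrt (by nlinarith)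
  have hkey1 : x ≤ y * c + s * ty := by
    have h := key_ineq ψ₂ ψ₃ ψ₁ h₂ h₃ h₁
    rw [hsym] at h
    simpa [← hxdef, ← hydef, ← hsdef, ← htydef] using h
  have hkey2 : y ≤ x * c + s * tx := by
    have h := key_ineq ψ₃ ψ₂ ψ₁ h₃ h₂ h₁
    simpa [← hxdef, ← hydef, ← hcdef, ← hsdef, ← htxdef] using h
  rw [abs_sub_le_iff]
  exact ⟨key_real x y c s ty hx0 hs0 hs2 hty2 hkey1,
    key_real y x c s tx hy0 hs0 hs2 htx2 hkey2⟩
end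

section
/- Let Φ₀, Ψ, Φ be unit vectors in a complex inner product space E, and let R ≥ 0 be a real number with arccos|⟨Φ₀, Ψ⟩| ≤ R. Then | |⟨Φ, Ψ⟩|² − |⟨Φ₀, Φ⟩|² | ≤ sin(min(R, π/2)). -/
open scoped InnerProductSpace
open Real

section Aux

open scoped ComplexConjugate

private lemma real_key_aux (a b c t u : ℝ) (ha : 0 ≤ a) (hb : 0 ≤ b) (hc : 0 ≤ c)
    (ht : 0 ≤ t) (hu : 0 ≤ u) (ht1 : t ≤ 1)
    (hct : c ^ 2 + t ^ 2 = 1) (hbu : b ^ 2 + u ^ 2 = 1)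
    (habs : |a - b * c| ≤ u * t) : |a ^ 2 - b ^ 2| ≤ t := by
  obtain ⟨h2, h1⟩ := abs_le.mp habs
  rw [abs_le]
  constructor
  · rcases le_or_gt (b * c) (u * t) with h | h
    · have hb2 : b ^ 2 ≤ t ^ 2 := by nlinarith [mul_nonneg hb hc, mul_nonneg hu ht]
      nlinarith [sq_nonneg a]
    · have ha2 : (b * c - u * t) ^ 2 ≤ a ^ 2 := by nlinarith
      have heq : b ^ 2 - (b * c - u * t) ^ 2
          = t * (t * (2 * b ^ 2 - 1) + 2 * b * c * u) := by
        linear_combination (-(b ^ 2)) * hct + (-(t ^ 2)) * hbu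
      have hX : t * (2 * b ^ 2 - 1) + 2 * b * c * u ≤ 1 := by
        nlinarith [sq_nonneg (t - (2 * b ^ 2 - 1)), sq_nonneg (c - 2 * b * u)]
      nlinarith [mul_le_mul_of_nonneg_left hX ht]
  · have ha2 : a ^ 2 ≤ (b * c + u * t) ^ 2 := by
      nlinarith [mul_nonneg hb hc, mul_nonneg hu ht]
    have heq : (b * c + u * t) ^ 2 - b ^ 2
        = t * (t * (1 - 2 * b ^ 2) + 2 * b * c * u) := by
      linear_combination (t ^ 2) * hbu + (b ^ 2) * hct
    have hX : t * (1 - 2 * b ^ 2) + 2 * b * c * u ≤ 1 := by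
      nlinarith [sq_nonneg (t - (1 - 2 * b ^ 2)), sq_nonneg (c - 2 * b * u)]
    nlinarith [mul_le_mul_of_nonneg_left hX ht]

end Aux

/-- First improved inequality: for unit vectors `Φ₀, Ψ, Φ`
and `R ≥ 0` with `arccos |⟨Φ₀, Ψ⟩| ≤ R`, one has
`| |⟨Φ, Ψ⟩|² - |⟨Φ₀, Φ⟩|² | ≤ sin (min R (π/2))`. -/
theorem fidelity_diff_le_sin_min
    {E : Type*} [NormedAddCommGroup E] [InnerProductSpace ℂ E]
    (Φ₀ Ψ Φ : E) (hΦ₀ : ‖Φ₀‖ = 1) (hΨ : ‖Ψ‖ = 1) (hΦ : ‖Φ‖ = 1)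
    (R : ℝ) (hR : 0 ≤ R) (hRle : Real.arccos (‖⟪Φ₀, Ψ⟫_ℂ‖) ≤ R) :
    |‖⟪Φ, Ψ⟫_ℂ‖ ^ 2 - ‖⟪Φ₀, Φ⟫_ℂ‖ ^ 2|
      ≤ Real.sin (min R (π / 2)) := by
  open scoped ComplexConjugate in
  have e0 : ⟪Φ₀, Φ₀⟫_ℂ = 1 := by rw [inner_self_eq_norm_sq_to_K, hΦ₀]; norm_num
  have e1 : ⟪Ψ, Ψ⟫_ℂ = 1 := by rw [inner_self_eq_norm_sq_to_K, hΨ]; norm_num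
  have e2 : ⟪Φ, Φ⟫_ℂ = 1 := by rw [inner_self_eq_norm_sq_to_K, hΦ]; norm_num
  have habs : ∀ z : ℂ, ((‖z‖ : ℝ) : ℂ) ^ 2 = z * conj z := by
    intro z
    rw [← Complex.ofReal_pow, Complex.sq_norm]
    exact (Complex.mul_conj z).symm
  set P : E := Ψ - ⟪Φ₀, Ψ⟫_ℂ • Φ₀ with hPdef
  set Q : E := Φ - ⟪Φ₀, Φ⟫_ℂ • Φ₀ with hQdef
  have hQP : ⟪Q, P⟫_ℂ = ⟪Φ, Ψ⟫_ℂ - conj ⟪Φ₀, Φ⟫_ℂ * ⟪Φ₀, Ψ⟫_ℂ := by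
    simp only [hPdef, hQdef, inner_sub_left, inner_sub_right, inner_smul_left,
      inner_smul_right, e0, inner_conj_symm]
    ring
  have hP2 : ‖P‖ ^ 2 = 1 - ‖⟪Φ₀, Ψ⟫_ℂ‖ ^ 2 := by
    have h : ⟪P, P⟫_ℂ = ((1 - ‖⟪Φ₀, Ψ⟫_ℂ‖ ^ 2 : ℝ) : ℂ) := by
      simp only [hPdef, inner_sub_left, inner_sub_right, inner_smul_left,
        inner_smul_right, e0, e1, inner_conj_symm]
      rw [show ⟪Ψ, Φ₀⟫_ℂ = conj ⟪Φ₀, Ψ⟫_ℂ from (inner_conj_symm _ _).symm]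
      push_cast
      rw [habs]
      ring
    rw [inner_self_eq_norm_sq_to_K (𝕜 := ℂ) P] at h
    exact Complex.ofReal_injective (by push_cast; push_cast at h; exact h)
  have hQ2 : ‖Q‖ ^ 2 = 1 - ‖⟪Φ₀, Φ⟫_ℂ‖ ^ 2 := by
    have h : ⟪Q, Q⟫_ℂ = ((1 - ‖⟪Φ₀, Φ⟫_ℂ‖ ^ 2 : ℝ) : ℂ) := by
      simp only [hQdef, inner_sub_left, inner_sub_right, inner_smul_left,
        inner_smul_right, e0, e2, inner_conj_symm]
      rw [show ⟪Φ, Φ₀⟫_ℂ = conj ⟪Φ₀, Φ⟫_ℂ from (inner_conj_symm _ _).symm]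
      push_cast
      rw [habs]
      ring
    rw [inner_self_eq_norm_sq_to_K (𝕜 := ℂ) Q] at h
    exact Complex.ofReal_injective (by push_cast; push_cast at h; exact h)
  set a : ℝ := ‖⟪Φ, Ψ⟫_ℂ‖ with hadef
  set b : ℝ := ‖⟪Φ₀, Φ⟫_ℂ‖ with hbdef
  set c : ℝ := ‖⟪Φ₀, Ψ⟫_ℂ‖ with hcdef
  set t : ℝ := ‖P‖ with htdef
  set u : ℝ := ‖Q‖ with hudef
  -- |a - b*c| ≤ u*t
  have key : |a - b * c| ≤ u * t := by
    have h1 : ‖⟪Φ, Ψ⟫_ℂ - conj ⟪Φ₀, Φ⟫_ℂ * ⟪Φ₀, Ψ⟫_ℂ‖ ≤ u * t := by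
      rw [← hQP]; exact norm_inner_le_norm Q P
    have h2 : |‖⟪Φ, Ψ⟫_ℂ‖ - ‖conj ⟪Φ₀, Φ⟫_ℂ * ⟪Φ₀, Ψ⟫_ℂ‖|
        ≤ ‖⟪Φ, Ψ⟫_ℂ - conj ⟪Φ₀, Φ⟫_ℂ * ⟪Φ₀, Ψ⟫_ℂ‖ := abs_norm_sub_norm_le _ _
    have h3 : ‖conj ⟪Φ₀, Φ⟫_ℂ * ⟪Φ₀, Ψ⟫_ℂ‖ = b * c := by
      rw [norm_mul, Complex.norm_conj]
    rw [h3, show ‖⟪Φ, Ψ⟫_ℂ‖ = a from by simp [hadef]] at h2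
    exact h2.trans h1
  have ha : 0 ≤ a := norm_nonneg _
  have hb : 0 ≤ b := norm_nonneg _
  have hc : 0 ≤ c := norm_nonneg _
  have ht : 0 ≤ t := norm_nonneg _
  have hu : 0 ≤ u := norm_nonneg _
  have hc1 : c ≤ 1 := by
    have := norm_inner_le_norm (𝕜 := ℂ) Φ₀ Ψ
    rw [hΦ₀, hΨ] at this
    simpa [hcdef] using this
  have hct : c ^ 2 + t ^ 2 = 1 := by rw [hP2]; ring
  have hbu : b ^ 2 + u ^ 2 = 1 := by rw [hQ2]; ring
  have ht1 : t ≤ 1 := by nlinarith [sq_nonneg c]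
  have main : |a ^ 2 - b ^ 2| ≤ t := real_key_aux a b c t u ha hb hc ht hu ht1 hct hbu key
  -- now t = sin (arccos c) ≤ sin (min R (π/2))
  have htsin : t = Real.sin (Real.arccos c) := by
    rw [Real.sin_arccos, show 1 - c ^ 2 = t ^ 2 by linarith [hct], Real.sqrt_sq ht]
  have hsin : Real.sin (Real.arccos c) ≤ Real.sin (min R (π / 2)) := by
    apply Real.sin_le_sin_of_le_of_le_pi_div_two
    · linarith [Real.arccos_nonneg c, Real.pi_pos]
    · exact min_le_right _ _
    · exact le_min hRle (Real.arccos_le_pi_div_two.mpr hc)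
  calc |a ^ 2 - b ^ 2| ≤ t := main
    _ = Real.sin (Real.arccos c) := htsin
    _ ≤ Real.sin (min R (π / 2)) := hsin
end

section
/- Let Φ₀, Ψ, Φ be unit vectors in a complex inner product space E, set C = |⟨Φ₀, Φ⟩|², and let R ≥ 0 be a real number with arccos|⟨Φ₀, Ψ⟩| ≤ R. Then | |⟨Φ, Ψ⟩|² − C | ≤ sin²(min(R, π/2))·|1 − 2C| + sin(2·min(R, π/4))·√C·√(1 − C). -/
open scoped InnerProductSpace
open Real

private lemma arccos_anti : Antitone Real.arccos := fun a b h => by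
  unfold Real.arccos; linarith [Real.monotone_arcsin h]

/-- Core geometric lemma. -/
private lemma core_ineq {E : Type*} [NormedAddCommGroup E] [InnerProductSpace ℂ E]
    (x y z : E) (hx : ‖x‖ = 1) (hy : ‖y‖ = 1) (hz : ‖z‖ = 1) :
    ‖⟪y, x⟫_ℂ‖ * ‖⟪y, z⟫_ℂ‖ - Real.sqrt (1 - ‖⟪y, x⟫_ℂ‖ ^ 2) * Real.sqrt (1 - ‖⟪y, z⟫_ℂ‖ ^ 2)
      ≤ ‖⟪x, z⟫_ℂ‖ := by
  set p : ℂ := ⟪y, x⟫_ℂ with hp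
  set q : ℂ := ⟪y, z⟫_ℂ with hq
  set x' : E := x - p • y with hx'
  set z' : E := z - q • y with hz'
  have hyy : ⟪y, y⟫_ℂ = 1 := by
    rw [inner_self_eq_norm_sq_to_K, hy]; norm_num
  have hyx' : ⟪y, x'⟫_ℂ = 0 := by
    simp [hx', inner_sub_right, inner_smul_right, hyy, hy, hp]
  have hyz' : ⟪y, z'⟫_ℂ = 0 := by
    simp [hz', inner_sub_right, inner_smul_right, hyy, hy, hq]
  have hx'y : ⟪x', y⟫_ℂ = 0 := by
    rw [← inner_conj_symm, hyx']; simp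
  have hdecomp : ⟪x, z⟫_ℂ = (starRingEnd ℂ) p * q + ⟪x', z'⟫_ℂ := by
    have : x = x' + p • y := by simp [hx']
    have hzz : z = z' + q • y := by simp [hz']
    rw [this, hzz]
    rw [inner_add_left, inner_add_right, inner_add_right, inner_smul_left,
      inner_smul_right, inner_smul_left, inner_smul_right, hyz', hx'y, hyy]
    ring
  have key : ∀ w : E, ‖w‖ = 1 → ∀ r : ℂ, ⟪y, w⟫_ℂ = r → ‖w - r • y‖ = Real.sqrt (1 - ‖r‖ ^ 2) := by
    intro w hw r hr
    have h2 : ‖w - r • y‖ ^ 2 = 1 - ‖r‖ ^ 2 := by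
      have h1 : ⟪w, r • y⟫_ℂ = r * (starRingEnd ℂ) r := by
        rw [inner_smul_right, ← inner_conj_symm, hr]
      have h3 := @norm_sub_sq ℂ E _ _ _ w (r • y)
      rw [h1, norm_smul, hw, hy] at h3
      simp only [Complex.mul_conj] at h3
      rw [h3]
      simp [Complex.normSq_eq_norm_sq, ← Complex.ofReal_pow]
      ring
    rw [← h2, Real.sqrt_sq (norm_nonneg _)]
  have hnx' : ‖x'‖ = Real.sqrt (1 - ‖p‖ ^ 2) := key x hx p rfl
  have hnz' : ‖z'‖ = Real.sqrt (1 - ‖q‖ ^ 2) := key z hz q rfl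
  have hCS : ‖⟪x', z'⟫_ℂ‖ ≤ Real.sqrt (1 - ‖p‖ ^ 2) * Real.sqrt (1 - ‖q‖ ^ 2) := by
    rw [← hnx', ← hnz']
    exact norm_inner_le_norm x' z'
  have htri : ‖(starRingEnd ℂ) p * q‖ - ‖⟪x', z'⟫_ℂ‖ ≤ ‖⟪x, z⟫_ℂ‖ := by
    rw [hdecomp]
    have := norm_add_le ((starRingEnd ℂ) p * q + ⟪x', z'⟫_ℂ) (-⟪x', z'⟫_ℂ)
    simp only [add_neg_cancel_right, norm_neg] at this
    linarith
  have hnm : ‖(starRingEnd ℂ) p * q‖ = ‖p‖ * ‖q‖ := by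
    rw [norm_mul, RCLike.norm_conj]
  linarith


private lemma arccos_tri {E : Type*} [NormedAddCommGroup E] [InnerProductSpace ℂ E]
    (x y z : E) (hx : ‖x‖ = 1) (hy : ‖y‖ = 1) (hz : ‖z‖ = 1) :
    Real.arccos ‖⟪x, z⟫_ℂ‖ ≤ Real.arccos ‖⟪y, x⟫_ℂ‖ + Real.arccos ‖⟪y, z⟫_ℂ‖ := by
  set u := ‖⟪y, x⟫_ℂ‖ with hu
  set v := ‖⟪y, z⟫_ℂ‖ with hv
  set w := ‖⟪x, z⟫_ℂ‖ with hw
  have hu0 : (0:ℝ) ≤ u := norm_nonneg _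
  have hv0 : (0:ℝ) ≤ v := norm_nonneg _
  have hu1 : u ≤ 1 := by simpa [hy, hx] using norm_inner_le_norm (𝕜 := ℂ) y x
  have hv1 : v ≤ 1 := by simpa [hy, hz] using norm_inner_le_norm (𝕜 := ℂ) y z
  by_cases hcase : π / 2 ≤ Real.arccos u + Real.arccos v
  · exact le_trans (Real.arccos_le_pi_div_two.2 (norm_nonneg _)) hcase
  · push_neg at hcase
    have hsum0 : 0 ≤ Real.arccos u + Real.arccos v :=
      add_nonneg (Real.arccos_nonneg _) (Real.arccos_nonneg _)
    have hcos : Real.cos (Real.arccos u + Real.arccos v) ≤ w := by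
      rw [Real.cos_add, Real.cos_arccos (by linarith) hu1, Real.cos_arccos (by linarith) hv1,
        Real.sin_arccos, Real.sin_arccos]
      exact core_ineq x y z hx hy hz
    calc Real.arccos w ≤ Real.arccos (Real.cos (Real.arccos u + Real.arccos v)) :=
          arccos_anti hcos
      _ = Real.arccos u + Real.arccos v := Real.arccos_cos hsum0 (by linarith [pi_pos])

private lemma cos_sq_diff (α δ : ℝ) :
    Real.cos (α + δ) ^ 2 - Real.cos α ^ 2 =
      -(Real.sin δ ^ 2 * (2 * Real.cos α ^ 2 - 1))
        - 2 * Real.sin α * Real.cos α * (Real.sin δ * Real.cos δ) := by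
  rw [Real.cos_add]
  linear_combination (Real.cos α ^ 2) * Real.sin_sq_add_cos_sq δ
    + (Real.sin δ ^ 2) * Real.sin_sq_add_cos_sq α

private lemma trig_key (α γ R : ℝ) (hR : 0 ≤ R) (hα0 : 0 ≤ α) (hα1 : α ≤ π / 2)
    (hγ0 : 0 ≤ γ) (hγ1 : γ ≤ π / 2) (hδR : |γ - α| ≤ R) :
    |Real.cos γ ^ 2 - Real.cos α ^ 2| ≤
      Real.sin (min R (π / 2)) ^ 2 * |1 - 2 * Real.cos α ^ 2|
        + Real.sin (2 * min R (π / 4)) * (Real.cos α * Real.sin α) := by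
  set δ := γ - α with hδ
  have hδ2 : |δ| ≤ π / 2 := abs_le.2 ⟨by linarith, by linarith⟩
  have hδmin : |δ| ≤ min R (π / 2) := le_min hδR hδ2
  have hpi := Real.pi_pos
  -- |sin t| = sin |t| for |t| ≤ π
  have habs_sin : ∀ t : ℝ, |t| ≤ π → |Real.sin t| = Real.sin |t| := by
    intro t ht
    rcases abs_cases t with ⟨h1, h2⟩ | ⟨h1, h2⟩
    · rw [h1]
      exact abs_of_nonneg (Real.sin_nonneg_of_nonneg_of_le_pi h2 (h1 ▸ ht))
    · have hnt : -t ≤ π := by rw [h1] at ht; exact ht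
      have h4 : 0 ≤ Real.sin (-t) := Real.sin_nonneg_of_nonneg_of_le_pi (by linarith) hnt
      rw [Real.sin_neg] at h4
      have h3 : Real.sin |t| = -Real.sin t := by rw [h1, Real.sin_neg]
      rw [h3, abs_of_nonpos (by linarith)]
  have hmin0 : 0 ≤ min R (π / 2) := le_min hR (by linarith)
  have hmin2 : min R (π / 2) ≤ π / 2 := min_le_right _ _
  have hsmono := Real.strictMonoOn_sin.monotoneOn
  have h1 : |Real.sin δ| ≤ Real.sin (min R (π / 2)) := by
    rw [habs_sin δ (by linarith [abs_nonneg δ])]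
    exact hsmono ⟨by linarith [abs_nonneg δ], by linarith⟩ ⟨by linarith, hmin2⟩ hδmin
  have hsq : Real.sin δ ^ 2 ≤ Real.sin (min R (π / 2)) ^ 2 := by
    rw [← sq_abs]
    exact pow_le_pow_left₀ (abs_nonneg _) h1 2
  have h2 : 2 * |Real.sin δ * Real.cos δ| ≤ Real.sin (2 * min R (π / 4)) := by
    have hsin2 : Real.sin (2 * δ) = 2 * Real.sin δ * Real.cos δ := Real.sin_two_mul δ
    have habs2 : |Real.sin (2 * δ)| = 2 * |Real.sin δ * Real.cos δ| := by
      rw [hsin2, mul_assoc, abs_mul, abs_two]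
    rw [← habs2, habs_sin (2 * δ) (by rw [abs_mul, abs_two]; linarith)]
    rcases le_or_gt (|2 * δ|) (π / 2) with hc | hc
    · have hd4 : |δ| ≤ π / 4 := by rw [abs_mul, abs_two] at hc; linarith
      have hmin4 : |2 * δ| ≤ 2 * min R (π / 4) := by
        rw [abs_mul, abs_two]
        have : |δ| ≤ min R (π / 4) := le_min hδR hd4
        linarith
      have h04 : 0 ≤ min R (π / 4) := le_min hR (by linarith)
      exact hsmono ⟨by linarith [abs_nonneg (2 * δ)], hc⟩
        ⟨by linarith, by linarith [min_le_right R (π / 4)]⟩ hmin4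
    · have hR4 : min R (π / 4) = π / 4 := by
        rw [abs_mul, abs_two] at hc
        have : π / 4 < |δ| := by linarith
        exact min_eq_right (by linarith [hδR])
      rw [hR4]
      have he : (2:ℝ) * (π / 4) = π / 2 := by ring
      rw [he, Real.sin_pi_div_two]
      exact Real.sin_le_one _
  -- the identity
  have hid := cos_sq_diff α δ
  have hγeq : γ = α + δ := by simp [hδ]
  rw [hγeq, hid]
  have hca : 0 ≤ Real.cos α := Real.cos_nonneg_of_mem_Icc ⟨by linarith, hα1⟩
  have hsa : 0 ≤ Real.sin α := Real.sin_nonneg_of_nonneg_of_le_pi hα0 (by linarith)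
  have habs1 : |1 - 2 * Real.cos α ^ 2| = |2 * Real.cos α ^ 2 - 1| := abs_sub_comm _ _
  calc |-(Real.sin δ ^ 2 * (2 * Real.cos α ^ 2 - 1))
        - 2 * Real.sin α * Real.cos α * (Real.sin δ * Real.cos δ)|
      ≤ |Real.sin δ ^ 2 * (2 * Real.cos α ^ 2 - 1)|
        + |2 * Real.sin α * Real.cos α * (Real.sin δ * Real.cos δ)| := by
        have h5 := abs_add_le (-(Real.sin δ ^ 2 * (2 * Real.cos α ^ 2 - 1)))
          (-(2 * Real.sin α * Real.cos α * (Real.sin δ * Real.cos δ)))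
        simpa [abs_neg, sub_eq_add_neg] using h5
    _ = Real.sin δ ^ 2 * |2 * Real.cos α ^ 2 - 1|
        + 2 * Real.sin α * Real.cos α * |Real.sin δ * Real.cos δ| := by
        rw [abs_mul, abs_mul, abs_pow, sq_abs, abs_of_nonneg (by positivity : (0:ℝ) ≤ 2 * Real.sin α * Real.cos α)]
    _ ≤ Real.sin (min R (π / 2)) ^ 2 * |1 - 2 * Real.cos α ^ 2|
        + Real.sin (2 * min R (π / 4)) * (Real.cos α * Real.sin α) := by
        rw [habs1]
        have t1 : Real.sin δ ^ 2 * |2 * Real.cos α ^ 2 - 1|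
            ≤ Real.sin (min R (π / 2)) ^ 2 * |2 * Real.cos α ^ 2 - 1| :=
          mul_le_mul_of_nonneg_right hsq (abs_nonneg _)
        nlinarith [mul_le_mul_of_nonneg_left h2 (mul_nonneg hsa hca)]

/-- Second improved inequality: for unit vectors `Φ₀, Ψ, Φ`,
`C = |⟨Φ₀, Φ⟩|²`, and `R ≥ 0` with `arccos |⟨Φ₀, Ψ⟩| ≤ R`, one has
`| |⟨Φ, Ψ⟩|² - C | ≤ sin²(min R (π/2)) |1 - 2C| + sin(2 min R (π/4)) √C √(1-C)`. -/
theorem fidelity_diff_le_g_of_bound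
    {E : Type*} [NormedAddCommGroup E] [InnerProductSpace ℂ E]
    (Φ₀ Ψ Φ : E) (hΦ₀ : ‖Φ₀‖ = 1) (hΨ : ‖Ψ‖ = 1) (hΦ : ‖Φ‖ = 1)
    (C : ℝ) (hC : C = ‖⟪Φ₀, Φ⟫_ℂ‖ ^ 2)
    (R : ℝ) (hR : 0 ≤ R) (hRle : Real.arccos ‖⟪Φ₀, Ψ⟫_ℂ‖ ≤ R) :
    |‖⟪Φ, Ψ⟫_ℂ‖ ^ 2 - C|
      ≤ Real.sin (min R (π / 2)) ^ 2 * |1 - 2 * C|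
        + Real.sin (2 * min R (π / 4)) * Real.sqrt C * Real.sqrt (1 - C) := by
  set a := ‖⟪Φ₀, Φ⟫_ℂ‖ with ha
  set b := ‖⟪Φ₀, Ψ⟫_ℂ‖ with hb
  set c := ‖⟪Φ, Ψ⟫_ℂ‖ with hcc
  have ha0 : (0:ℝ) ≤ a := norm_nonneg _
  have hc0 : (0:ℝ) ≤ c := norm_nonneg _
  have ha1 : a ≤ 1 := by simpa [hΦ₀, hΦ] using norm_inner_le_norm (𝕜 := ℂ) Φ₀ Φ
  have hc1 : c ≤ 1 := by simpa [hΦ, hΨ] using norm_inner_le_norm (𝕜 := ℂ) Φ Ψ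
  set α := Real.arccos a with hα
  set γ := Real.arccos c with hγ
  set θ := Real.arccos b with hθ
  have hθR : θ ≤ R := hRle
  have htri1 : γ ≤ α + θ := by
    have h := arccos_tri Φ Φ₀ Ψ hΦ hΦ₀ hΨ
    simpa [hα, hγ, hθ] using h
  have htri2 : α ≤ θ + γ := by
    have h := arccos_tri Φ₀ Ψ Φ hΦ₀ hΨ hΦ
    rw [norm_inner_symm Ψ Φ₀, norm_inner_symm Ψ Φ] at h
    exact h
  have hθ0 : 0 ≤ θ := Real.arccos_nonneg _
  have hδR : |γ - α| ≤ R := abs_le.2 ⟨by linarith, by linarith⟩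
  have hca : Real.cos α = a := Real.cos_arccos (by linarith) ha1
  have hcg : Real.cos γ = c := Real.cos_arccos (by linarith) hc1
  have hkey := trig_key α γ R hR (Real.arccos_nonneg _) (Real.arccos_le_pi_div_two.2 ha0)
    (Real.arccos_nonneg _) (Real.arccos_le_pi_div_two.2 hc0) hδR
  rw [hca, hcg] at hkey
  have hsqC : Real.sqrt C = a := by rw [hC, Real.sqrt_sq ha0]
  have hsq1C : Real.sqrt (1 - C) = Real.sin α := by
    rw [hC, hα, Real.sin_arccos]
  rw [hsqC, hsq1C, hC]
  calc |c ^ 2 - a ^ 2| ≤ Real.sin (min R (π / 2)) ^ 2 * |1 - 2 * a ^ 2|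
        + Real.sin (2 * min R (π / 4)) * (a * Real.sin α) := by
        exact hkey
    _ = Real.sin (min R (π / 2)) ^ 2 * |1 - 2 * a ^ 2|
        + Real.sin (2 * min R (π / 4)) * a * Real.sin α := by ring
end

section
/- Let H be a self-adjoint bounded operator on a complex Hilbert space E and let ψ₀, ψ be unit vectors. Set F = |⟨ψ₀, ψ⟩|² and ΔE₀ = √(‖Hψ₀‖² − (Re⟨ψ₀, Hψ₀⟩)²). Then |Re( i·⟨ψ, Hψ₀⟩·⟨ψ₀, ψ⟩ )| ≤ ΔE₀ · √(F·(1 − F)). -/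
open scoped InnerProductSpace
open Real

/-- Key estimate for the quantum speed limit: for a
self-adjoint bounded operator `H` and unit vectors `ψ₀, ψ`, with
`F = |⟨ψ₀, ψ⟩|²` and `ΔE₀ = √(‖Hψ₀‖² - (Re⟨ψ₀, Hψ₀⟩)²)`, one has
`|Re(i ⟨ψ, Hψ₀⟩ ⟨ψ₀, ψ⟩)| ≤ ΔE₀ √(F(1-F))`. -/
theorem re_bound_uncertainty
    {E : Type*} [NormedAddCommGroup E] [InnerProductSpace ℂ E] [CompleteSpace E]
    (H : E →L[ℂ] E) (hH : ∀ x y : E, ⟪H x, y⟫_ℂ = ⟪x, H y⟫_ℂ)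
    (ψ₀ ψ : E) (hψ₀ : ‖ψ₀‖ = 1) (hψ : ‖ψ‖ = 1)
    (F ΔE₀ : ℝ) (hF : F = ‖⟪ψ₀, ψ⟫_ℂ‖ ^ 2)
    (hΔ : ΔE₀ = Real.sqrt (‖H ψ₀‖ ^ 2 - ((⟪ψ₀, H ψ₀⟫_ℂ).re) ^ 2)) :
    |(Complex.I * ⟪ψ, H ψ₀⟫_ℂ * ⟪ψ₀, ψ⟫_ℂ).re| ≤ ΔE₀ * Real.sqrt (F * (1 - F)) := by
  set c : ℂ := ⟪ψ₀, ψ⟫_ℂ with hc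
  set a : ℝ := (⟪ψ₀, H ψ₀⟫_ℂ).re with ha
  have hψ₀self : ⟪ψ₀, ψ₀⟫_ℂ = 1 := by
    rw [inner_self_eq_norm_sq_to_K, hψ₀]; norm_num
  have hreal : ⟪ψ₀, H ψ₀⟫_ℂ = (a : ℂ) := by
    have h1 : (starRingEnd ℂ) ⟪ψ₀, H ψ₀⟫_ℂ = ⟪ψ₀, H ψ₀⟫_ℂ := by
      rw [inner_conj_symm, hH]
    exact (Complex.conj_eq_iff_re.mp h1).symm
  set v : E := H ψ₀ - (a : ℂ) • ψ₀ with hv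
  set w : E := ψ - c • ψ₀ with hw
  have hψ₀v : ⟪ψ₀, v⟫_ℂ = 0 := by
    rw [hv, inner_sub_right, inner_smul_right, hψ₀self, hreal]; ring
  have hψv : ⟪ψ, v⟫_ℂ = ⟪w, v⟫_ℂ := by
    rw [hw, inner_sub_left, inner_smul_left, hψ₀v]; ring
  have hexp : ⟪ψ, H ψ₀⟫_ℂ = ⟪w, v⟫_ℂ + (a : ℂ) * (starRingEnd ℂ) c := by
    have : H ψ₀ = v + (a : ℂ) • ψ₀ := by rw [hv]; abel
    rw [this, inner_add_right, inner_smul_right, hψv, hc, inner_conj_symm]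
  -- real part of the extra term vanishes
  have hre : (Complex.I * ⟪ψ, H ψ₀⟫_ℂ * c).re = (Complex.I * ⟪w, v⟫_ℂ * c).re := by
    rw [hexp]
    have hcc : (starRingEnd ℂ) c * c = (Complex.normSq c : ℂ) := by
      rw [mul_comm, Complex.mul_conj]
    have : Complex.I * (⟪w, v⟫_ℂ + (a : ℂ) * (starRingEnd ℂ) c) * c
        = Complex.I * ⟪w, v⟫_ℂ * c + Complex.I * ((a : ℝ) * Complex.normSq c : ℝ) := by
      push_cast
      linear_combination Complex.I * (a : ℂ) * hcc
    rw [this]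
    simp [Complex.add_re, Complex.mul_re]
  -- norms
  have hFnn : 0 ≤ F := by rw [hF]; positivity
  have habsc : ‖c‖ = Real.sqrt F := by
    rw [hF, Real.sqrt_sq (norm_nonneg c)]
  have hnv : ‖v‖ = ΔE₀ := by
    have h1 : ⟪H ψ₀, (a : ℂ) • ψ₀⟫_ℂ = ((a ^ 2 : ℝ) : ℂ) := by
      rw [inner_smul_right, hH, hreal]; push_cast; ring
    have hsq : ‖v‖ ^ 2 = ‖H ψ₀‖ ^ 2 - a ^ 2 := by
      rw [hv, @norm_sub_sq ℂ, h1, norm_smul, hψ₀]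
      simp [Complex.norm_real, sq_abs, ← Complex.ofReal_pow, Complex.ofReal_re]
      ring
    rw [hΔ, ← hsq, Real.sqrt_sq (norm_nonneg v)]
  have hnw : ‖w‖ = Real.sqrt (1 - F) := by
    have hψψ₀ : ⟪ψ, ψ₀⟫_ℂ = (starRingEnd ℂ) c := by rw [hc, inner_conj_symm]
    have h2 : ⟪ψ, c • ψ₀⟫_ℂ = ((F : ℝ) : ℂ) := by
      rw [inner_smul_right, hψψ₀, Complex.mul_conj, hF, Complex.sq_norm]
    have hsq : ‖w‖ ^ 2 = 1 - F := by
      rw [hw, @norm_sub_sq ℂ, h2, norm_smul, hψ, hψ₀]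
      simp
      rw [hF]
      ring
    rw [← hsq, Real.sqrt_sq (norm_nonneg w)]
  -- chain of inequalities
  calc |(Complex.I * ⟪ψ, H ψ₀⟫_ℂ * c).re|
      = |(Complex.I * ⟪w, v⟫_ℂ * c).re| := by rw [hre]
    _ ≤ ‖Complex.I * ⟪w, v⟫_ℂ * c‖ := Complex.abs_re_le_norm _
    _ = ‖⟪w, v⟫_ℂ‖ * ‖c‖ := by
        simp [map_mul]
    _ ≤ ‖w‖ * ‖v‖ * ‖c‖ := by
        gcongr
        simpa using norm_inner_le_norm (𝕜 := ℂ) w v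
    _ = ΔE₀ * Real.sqrt (F * (1 - F)) := by
        rw [hnv, hnw, habsc, Real.sqrt_mul hFnn]
        ring
end

section
/- Mandelstam–Tamm-type quantum speed limit: let H : ℝ → (E →L[ℂ] E) be a continuous family of self-adjoint bounded operators on a complex Hilbert space E, let ψ₀ be a unit vector, and let ψ : ℝ → E satisfy ψ 0 = ψ₀ and, for every t, ψ'(t) = −i·(H t)(ψ t). Then for every T ≥ 0, arccos|⟨ψ₀, ψ T⟩| ≤ ∫₀ᵀ √(‖(H t)(ψ t)‖² − (Re⟨ψ t, (H t)(ψ t)⟩)²) dt. -/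
open scoped InnerProductSpace
open Real

private lemma mt_key_bound {E : Type*} [NormedAddCommGroup E] [InnerProductSpace ℂ E]
    (ψ₀ χ A : E) (hψ₀n : ‖ψ₀‖ = 1) (hχ : ‖χ‖ = 1)
    (hEA : ⟪χ, A⟫_ℂ = ((⟪χ, A⟫_ℂ).re : ℂ)) :
    |2 * ((starRingEnd ℂ) ⟪ψ₀, χ⟫_ℂ * (-Complex.I * ⟪ψ₀, A⟫_ℂ)).re|
      ≤ 2 * Real.sqrt (Complex.normSq ⟪ψ₀, χ⟫_ℂ) * Real.sqrt (1 - Complex.normSq ⟪ψ₀, χ⟫_ℂ)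
        * Real.sqrt (‖A‖^2 - ((⟪χ, A⟫_ℂ).re)^2) := by
  set c : ℂ := ⟪ψ₀, χ⟫_ℂ with hc
  set Ex : ℝ := (⟪χ, A⟫_ℂ).re with hEx
  set ξ : E := A - (Ex:ℂ) • χ with hξ
  set φ : E := ψ₀ - (starRingEnd ℂ) c • χ with hφ
  have hξχ : ⟪χ, ξ⟫_ℂ = 0 := by
    rw [hξ, inner_sub_right, inner_smul_right, ← hEA, inner_self_eq_norm_sq_to_K, hχ]
    simp
  have hχψ₀ : ⟪χ, ψ₀⟫_ℂ = (starRingEnd ℂ) c := by rw [hc, ← inner_conj_symm]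
  have hφχ : ⟪χ, φ⟫_ℂ = 0 := by
    rw [hφ, inner_sub_right, inner_smul_right, hχψ₀, inner_self_eq_norm_sq_to_K, hχ]
    simp
  have hξχ' : ⟪ξ, χ⟫_ℂ = 0 := by rw [← inner_conj_symm, hξχ]; simp
  have hφχ' : ⟪φ, χ⟫_ℂ = 0 := by rw [← inner_conj_symm, hφχ]; simp
  have hnξ : ‖ξ‖^2 = ‖A‖^2 - Ex^2 := by
    have h2 : ⟪ξ, (Ex:ℂ) • χ⟫_ℂ = 0 := by rw [inner_smul_right, hξχ']; simp
    have hA : A = ξ + (Ex:ℂ) • χ := by rw [hξ]; abel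
    have h3 := @norm_add_sq ℂ E _ _ _ ξ ((Ex:ℂ) • χ)
    rw [← hA, h2, norm_smul, hχ] at h3
    simp at h3
    rw [h3]; ring
  have hnφ : ‖φ‖^2 = 1 - Complex.normSq c := by
    have h2 : ⟪φ, (starRingEnd ℂ) c • χ⟫_ℂ = 0 := by rw [inner_smul_right, hφχ']; simp
    have hA : ψ₀ = φ + (starRingEnd ℂ) c • χ := by rw [hφ]; abel
    have h3 := @norm_add_sq ℂ E _ _ _ φ ((starRingEnd ℂ) c • χ)
    rw [← hA, h2, norm_smul, hψ₀n, hχ] at h3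
    have hnc : ‖(starRingEnd ℂ) c‖ = ‖c‖ := by simp
    rw [hnc] at h3
    simp at h3
    have h4 : ‖φ‖^2 = 1 - ‖c‖ ^ 2 := by nlinarith [h3]
    rw [h4, Complex.sq_norm]
  have hsplit : ⟪ψ₀, A⟫_ℂ = ⟪φ, ξ⟫_ℂ + (Ex:ℂ) * c := by
    have hA : A = ξ + (Ex:ℂ) • χ := by rw [hξ]; abel
    have hP : ψ₀ = φ + (starRingEnd ℂ) c • χ := by rw [hφ]; abel
    calc ⟪ψ₀, A⟫_ℂ = ⟪φ + (starRingEnd ℂ) c • χ, ξ + (Ex:ℂ) • χ⟫_ℂ := by rw [← hA, ← hP]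
      _ = ⟪φ, ξ⟫_ℂ + (Ex:ℂ) * c := by
          rw [inner_add_left, inner_add_right, inner_add_right, inner_smul_left,
            inner_smul_left, inner_smul_right, inner_smul_right, hξχ, hφχ',
            inner_self_eq_norm_sq_to_K, hχ]
          simp [mul_comm]
  have hDval : 2 * ((starRingEnd ℂ) c * (-Complex.I * ⟪ψ₀, A⟫_ℂ)).re
      = 2 * (-Complex.I * ((starRingEnd ℂ) c * ⟪φ, ξ⟫_ℂ)).re := by
    rw [hsplit]
    have key : (starRingEnd ℂ) c * (-Complex.I * (⟪φ, ξ⟫_ℂ + (Ex:ℂ) * c))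
        = -Complex.I * ((starRingEnd ℂ) c * ⟪φ, ξ⟫_ℂ)
          + -Complex.I * ((Ex * Complex.normSq c : ℝ):ℂ) := by
      push_cast
      rw [Complex.normSq_eq_conj_mul_self]
      ring
    rw [key]
    simp [Complex.add_re, Complex.mul_re]
  rw [hDval]
  have h1 : |2 * (-Complex.I * ((starRingEnd ℂ) c * ⟪φ, ξ⟫_ℂ)).re|
      ≤ 2 * (‖c‖ * (‖φ‖ * ‖ξ‖)) := by
    have h2 := Complex.abs_re_le_norm (-Complex.I * ((starRingEnd ℂ) c * ⟪φ, ξ⟫_ℂ))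
    have h3 : ‖(-Complex.I * ((starRingEnd ℂ) c * ⟪φ, ξ⟫_ℂ))‖
        = ‖c‖ * ‖⟪φ, ξ⟫_ℂ‖ := by
      simp [map_mul]
    rw [h3] at h2
    have h4 : ‖⟪φ, ξ⟫_ℂ‖ ≤ ‖φ‖ * ‖ξ‖ := by
      simpa using norm_inner_le_norm (𝕜 := ℂ) φ ξ
    have h5 : (0:ℝ) ≤ ‖c‖ := norm_nonneg c
    rw [abs_mul, abs_two]
    nlinarith [h2, h4, h5, norm_nonneg φ, norm_nonneg ξ,
      abs_nonneg ((-Complex.I * ((starRingEnd ℂ) c * ⟪φ, ξ⟫_ℂ)).re)]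
  refine h1.trans ?_
  have e1 : ‖c‖ = Real.sqrt (Complex.normSq c) := Complex.norm_def c
  have e2 : ‖φ‖ = Real.sqrt (1 - Complex.normSq c) := by
    rw [← hnφ, Real.sqrt_sq (norm_nonneg φ)]
  have e3 : ‖ξ‖ = Real.sqrt (‖A‖^2 - Ex^2) := by
    rw [← hnξ, Real.sqrt_sq (norm_nonneg ξ)]
  rw [e1, e2, e3]
  ring_nf
  exact le_refl _

/-- Mandelstam–Tamm-type quantum speed limit: if `ψ 0 = ψ₀`
and `ψ' t = -i (H t) (ψ t)` for all `t`, then for `T ≥ 0`,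
`arccos |⟨ψ₀, ψ T⟩| ≤ ∫₀ᵀ √(‖(H t)(ψ t)‖² - (Re⟨ψ t, (H t)(ψ t)⟩)²) dt`. -/
theorem mandelstam_tamm_speed_limit
    {E : Type*} [NormedAddCommGroup E] [InnerProductSpace ℂ E] [CompleteSpace E]
    (H : ℝ → (E →L[ℂ] E)) (hHcont : Continuous H)
    (hHsa : ∀ t, ∀ x y : E, ⟪(H t) x, y⟫_ℂ = ⟪x, (H t) y⟫_ℂ)
    (ψ₀ : E) (hψ₀ : ‖ψ₀‖ = 1) (ψ : ℝ → E) (hinit : ψ 0 = ψ₀)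
    (hψ : ∀ t, HasDerivAt ψ ((-Complex.I) • (H t) (ψ t)) t)
    (T : ℝ) (hT : 0 ≤ T) :
    Real.arccos ‖⟪ψ₀, ψ T⟫_ℂ‖
      ≤ ∫ t in (0 : ℝ)..T,
          Real.sqrt (‖(H t) (ψ t)‖ ^ 2 - ((⟪ψ t, (H t) (ψ t)⟫_ℂ).re) ^ 2) := by
  have hψc : Continuous ψ := continuous_iff_continuousAt.mpr fun t => (hψ t).continuousAt
  have hHψc : Continuous fun t => (H t) (ψ t) := hHcont.clm_apply hψc
  -- the expectation value is real
  have hreal : ∀ t, ⟪ψ t, (H t) (ψ t)⟫_ℂ = ((⟪ψ t, (H t) (ψ t)⟫_ℂ).re : ℂ) := by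
    intro t
    have h1 : (starRingEnd ℂ) ⟪ψ t, (H t) (ψ t)⟫_ℂ = ⟪ψ t, (H t) (ψ t)⟫_ℂ := by
      rw [inner_conj_symm]
      exact hHsa t _ _
    exact (Complex.conj_eq_iff_re.mp h1).symm
  -- the norm of ψ t is constant, equal to 1
  have hnorm : ∀ t, ‖ψ t‖ = 1 := by
    have hd : ∀ t, HasDerivAt (fun s => ⟪ψ s, ψ s⟫_ℂ) 0 t := by
      intro t
      have h := HasDerivAt.inner ℂ (hψ t) (hψ t)
      have hz : ⟪ψ t, (-Complex.I) • (H t) (ψ t)⟫_ℂ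
          + ⟪(-Complex.I) • (H t) (ψ t), ψ t⟫_ℂ = 0 := by
        rw [inner_smul_right, inner_smul_left, hHsa t]
        simp only [map_neg, Complex.conj_I]
        ring
      rw [hz] at h
      exact h
    have hconst : ∀ t, ⟪ψ t, ψ t⟫_ℂ = ⟪ψ 0, ψ 0⟫_ℂ :=
      fun t => is_const_of_deriv_eq_zero (𝕜 := ℝ)
        (fun s => (hd s).differentiableAt) (fun s => (hd s).deriv) t 0
    intro t
    have h2 : ((‖ψ t‖:ℂ))^2 = ((1:ℝ):ℂ)^2 := by
      have h := hconst t
      rw [hinit, inner_self_eq_norm_sq_to_K, inner_self_eq_norm_sq_to_K, hψ₀] at h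
      exact h
    have h3 : ‖ψ t‖^2 = (1:ℝ)^2 := by exact_mod_cast h2
    nlinarith [norm_nonneg (ψ t)]
  set c : ℝ → ℂ := fun t => ⟪ψ₀, ψ t⟫_ℂ with hcdef
  set u : ℝ → ℝ := fun t => Complex.normSq (c t) with hudef
  set D : ℝ → ℝ :=
    fun t => 2 * ((starRingEnd ℂ) (c t) * (-Complex.I * ⟪ψ₀, (H t) (ψ t)⟫_ℂ)).re with hDdef
  set ΔE : ℝ → ℝ :=
    fun t => Real.sqrt (‖(H t) (ψ t)‖ ^ 2 - ((⟪ψ t, (H t) (ψ t)⟫_ℂ).re) ^ 2) with hΔdef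
  clear_value c u D ΔE
  have hc : ∀ t, HasDerivAt c (-Complex.I * ⟪ψ₀, (H t) (ψ t)⟫_ℂ) t := by
    intro t
    rw [hcdef]
    have h := HasDerivAt.inner ℂ (hasDerivAt_const t ψ₀) (hψ t)
    simpa [inner_smul_right] using h
  have hcC : Continuous c := by
    rw [hcdef]; exact continuous_const.inner hψc
  have huC : Continuous u := by
    rw [hudef]; exact Complex.continuous_normSq.comp hcC
  have hinnerC : Continuous fun t => ⟪ψ₀, (H t) (ψ t)⟫_ℂ := continuous_const.inner hHψc
  have hDC : Continuous D := by
    rw [hDdef]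
    apply continuous_const.mul
    exact Complex.continuous_re.comp ((Complex.continuous_conj.comp hcC).mul
      (continuous_const.mul hinnerC))
  have hΔC : Continuous ΔE := by
    rw [hΔdef]
    apply Real.continuous_sqrt.comp
    exact (hHψc.norm.pow 2).sub ((Complex.continuous_re.comp (hψc.inner hHψc)).pow 2)
  have hu : ∀ t, HasDerivAt u (D t) t := by
    intro t
    set d : ℂ := -Complex.I * ⟪ψ₀, (H t) (ψ t)⟫_ℂ with hd
    have hre : HasDerivAt (fun s => (c s).re) d.re t := by
      have := (Complex.reCLM.hasFDerivAt (x := c t)).comp_hasDerivAt t (hc t)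
      exact this
    have him : HasDerivAt (fun s => (c s).im) d.im t := by
      have := (Complex.imCLM.hasFDerivAt (x := c t)).comp_hasDerivAt t (hc t)
      exact this
    have h2 : HasDerivAt (fun s => (c s).re * (c s).re + (c s).im * (c s).im)
        (d.re * (c t).re + (c t).re * d.re + (d.im * (c t).im + (c t).im * d.im)) t :=
      (hre.mul hre).add (him.mul him)
    have h3 : u = fun s => (c s).re * (c s).re + (c s).im * (c s).im := by
      funext s; simp [hudef, Complex.normSq_apply]
    rw [h3]
    convert h2 using 1
    simp [hDdef, hd, Complex.mul_re, Complex.conj_re, Complex.conj_im]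
    ring
  have hu0 : ∀ t, 0 ≤ u t := fun t => by rw [hudef]; exact Complex.normSq_nonneg _
  have hu1 : ∀ t, u t ≤ 1 := by
    intro t
    have h4 : ‖c t‖ ≤ 1 := by
      rw [hcdef]
      have := norm_inner_le_norm (𝕜 := ℂ) ψ₀ (ψ t)
      rwa [hψ₀, hnorm t, one_mul] at this
    have h5 : u t = ‖c t‖^2 := by
      rw [hudef]; simp [Complex.normSq_eq_norm_sq]
    nlinarith [norm_nonneg (c t)]
  have hD : ∀ t, |D t| ≤ 2 * Real.sqrt (u t) * Real.sqrt (1 - u t) * ΔE t := by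
    intro t
    rw [hDdef, hudef, hcdef, hΔdef]
    exact mt_key_bound ψ₀ (ψ t) ((H t) (ψ t)) hψ₀ (hnorm t) (hreal t)
  -- u 0 = 1
  have hc0 : c 0 = 1 := by
    rw [hcdef]
    simp only
    rw [hinit, inner_self_eq_norm_sq_to_K, hψ₀]
    norm_num
  have hu0val : u 0 = 1 := by rw [hudef]; simp [hc0]
  -- the ε-regularised estimate
  have hεbound : ∀ ε ∈ Set.Ioo (0:ℝ) 1,
      Real.arccos ((1-ε) * Real.sqrt (u T + ε))
        ≤ Real.arccos ((1-ε) * Real.sqrt (u 0 + ε)) + ∫ t in (0:ℝ)..T, ΔE t := by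
    intro ε hε
    obtain ⟨hε0, hε1⟩ := hε
    set a : ℝ → ℝ := fun t => (1-ε) * Real.sqrt (u t + ε) with hadef
    set θ : ℝ → ℝ := fun t => Real.arccos (a t) with hθdef
    set θ' : ℝ → ℝ := fun t =>
      -(1 / Real.sqrt (1 - (a t)^2)) * ((1-ε) * (1/(2 * Real.sqrt (u t + ε)) * D t)) with hθ'def
    clear_value θ'
    clear_value θ
    clear_value a
    have hupos : ∀ t, 0 < u t + ε := fun t => by nlinarith [hu0 t]
    have hsqpos : ∀ t, 0 < Real.sqrt (u t + ε) := fun t => Real.sqrt_pos.mpr (hupos t)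
    have hasq : ∀ t, (a t)^2 = (1-ε)^2 * (u t + ε) := by
      intro t
      rw [hadef]
      rw [mul_pow, Real.sq_sqrt (le_of_lt (hupos t))]
    have hasqlt : ∀ t, (a t)^2 < 1 := by
      intro t
      rw [hasq t]
      have hB : (1-ε)^2*(1+ε) < 1 := by
        nlinarith [mul_pos (mul_pos hε0 hε0) (sub_pos.mpr hε1), hε0]
      nlinarith [hu1 t, sq_nonneg (1-ε)]
    have hapos : ∀ t, 0 ≤ a t := fun t => by
      rw [hadef]; exact mul_nonneg (by linarith) (Real.sqrt_nonneg _)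
    have halt : ∀ t, a t < 1 := by
      intro t
      nlinarith [hasqlt t, hapos t]
    have hane1 : ∀ t, a t ≠ 1 := fun t => ne_of_lt (halt t)
    have hanem1 : ∀ t, a t ≠ -1 := fun t => by
      have := hapos t; intro h; rw [h] at this; linarith
    have h1masq : ∀ t, 0 < 1 - (a t)^2 := fun t => by nlinarith [hasqlt t]
    have hqpos : ∀ t, 0 < Real.sqrt (1 - (a t)^2) := fun t => Real.sqrt_pos.mpr (h1masq t)
    have hθd : ∀ t, HasDerivAt θ (θ' t) t := by
      intro t
      have hsq : HasDerivAt (fun s => Real.sqrt (u s + ε))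
          (1/(2 * Real.sqrt (u t + ε)) * D t) t := by
        have h := (Real.hasDerivAt_sqrt (ne_of_gt (hupos t))).comp t ((hu t).add_const ε)
        exact h
      have ha : HasDerivAt a ((1-ε) * (1/(2 * Real.sqrt (u t + ε)) * D t)) t := by
        rw [hadef]; exact hsq.const_mul (1-ε)
      have harc := (Real.hasDerivAt_arccos (hanem1 t) (hane1 t)).comp t ha
      rw [hθdef]
      simp only [hθ'def]
      exact harc
    have hθ'le : ∀ t, θ' t ≤ ΔE t := by
      intro t
      have hsp := hsqpos t
      have hqp := hqpos t
      have hΔnn : 0 ≤ ΔE t := by rw [hΔdef]; exact Real.sqrt_nonneg _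
      have e1 : Real.sqrt (u t) ≤ Real.sqrt (u t + ε) := Real.sqrt_le_sqrt (by linarith)
      have e2 : (1-ε) * Real.sqrt (1 - u t) ≤ Real.sqrt (1 - (a t)^2) := by
        have h2 : ((1-ε) * Real.sqrt (1 - u t))^2 ≤ 1 - (a t)^2 := by
          rw [mul_pow, Real.sq_sqrt (by linarith [hu1 t] : (0:ℝ) ≤ 1 - u t), hasq t]
          have hB : (1-ε)^2*(1+ε) ≤ 1 := by
            nlinarith [mul_pos (mul_pos hε0 hε0) (sub_pos.mpr hε1), hε0]
          nlinarith [hu0 t, hu1 t, hB]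
        have h3 : (0:ℝ) ≤ (1-ε) * Real.sqrt (1 - u t) :=
          mul_nonneg (by linarith) (Real.sqrt_nonneg _)
        nlinarith [Real.sq_sqrt (le_of_lt (h1masq t)), Real.sqrt_nonneg (1 - (a t)^2)]
      have hkey : (1-ε) * (-D t)
          ≤ 2 * Real.sqrt (u t + ε) * Real.sqrt (1 - (a t)^2) * ΔE t := by
        have h6 : -D t ≤ |D t| := neg_le_abs _
        have h7 := hD t
        have h8 : (0:ℝ) ≤ Real.sqrt (u t) := Real.sqrt_nonneg _
        have h9 : (0:ℝ) ≤ Real.sqrt (1 - u t) := Real.sqrt_nonneg _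
        nlinarith [mul_le_mul e1 e2 (mul_nonneg (by linarith) (Real.sqrt_nonneg _)) (le_of_lt hsp), hΔnn]
      have halg : ∀ (S Q DD e : ℝ), S ≠ 0 → Q ≠ 0 →
          -(1/Q) * (e * (1/(2*S)*DD)) = (e * (-DD))/(2*S*Q) := by
        intro S Q DD e hS hQ
        field_simp
        try ring
        try exact Or.inl trivial
      have hrw : θ' t = ((1-ε) * (-D t))
          / (2 * Real.sqrt (u t + ε) * Real.sqrt (1 - (a t)^2)) := by
        rw [hθ'def]
        exact halg _ _ (D t) (1-ε) (ne_of_gt hsp) (ne_of_gt hqp)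
      rw [hrw, div_le_iff₀ (mul_pos (mul_pos two_pos hsp) hqp)]
      nlinarith [hkey, hΔnn]
    have hθ'C : Continuous θ' := by
      have haC : Continuous a := by
        rw [hadef]
        exact continuous_const.mul (Real.continuous_sqrt.comp (huC.add continuous_const))
      have hq : Continuous fun t => Real.sqrt (1 - (a t)^2) :=
        Real.continuous_sqrt.comp (continuous_const.sub (haC.pow 2))
      have h1 : Continuous fun t => 1 / Real.sqrt (1 - (a t)^2) :=
        continuous_const.div hq fun t => ne_of_gt (hqpos t)
      have h2 : Continuous fun t => 1 / (2 * Real.sqrt (u t + ε)) :=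
        continuous_const.div (continuous_const.mul (Real.continuous_sqrt.comp
          (huC.add continuous_const))) fun t => ne_of_gt (mul_pos two_pos (hsqpos t))
      rw [hθ'def]
      exact (h1.neg).mul (continuous_const.mul (h2.mul hDC))
    have hFTC : ∫ t in (0:ℝ)..T, θ' t = θ T - θ 0 :=
      intervalIntegral.integral_eq_sub_of_hasDerivAt (fun t _ => hθd t)
        (hθ'C.intervalIntegrable 0 T)
    have hmono : ∫ t in (0:ℝ)..T, θ' t ≤ ∫ t in (0:ℝ)..T, ΔE t :=
      intervalIntegral.integral_mono_on hT (hθ'C.intervalIntegrable 0 T)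
        (hΔC.intervalIntegrable 0 T) (fun t _ => hθ'le t)
    have : θ T - θ 0 ≤ ∫ t in (0:ℝ)..T, ΔE t := by rw [← hFTC]; exact hmono
    rw [hθdef] at this
    simp only [hadef] at this
    linarith
  -- take the limit ε → 0⁺
  have hgoal : Real.arccos ‖c T‖ ≤ ∫ t in (0:ℝ)..T, ΔE t := by
    set I := ∫ t in (0:ℝ)..T, ΔE t with hI
    have hF : Filter.Tendsto (fun ε => Real.arccos ((1-ε) * Real.sqrt (u T + ε)))
        (nhdsWithin 0 (Set.Ioi 0)) (nhds (Real.arccos ‖c T‖)) := by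
      have hcont : Continuous fun ε : ℝ => Real.arccos ((1-ε) * Real.sqrt (u T + ε)) :=
        Real.continuous_arccos.comp ((continuous_const.sub continuous_id).mul
          (Real.continuous_sqrt.comp (continuous_const.add continuous_id)))
      have h0 : Real.arccos ((1-(0:ℝ)) * Real.sqrt (u T + 0)) = Real.arccos ‖c T‖ := by
        rw [hudef]
        simp [Complex.norm_def]
      have := hcont.continuousAt (x := (0:ℝ))
      rw [ContinuousAt, h0] at this
      exact this.mono_left nhdsWithin_le_nhds
    have hG : Filter.Tendsto (fun ε => Real.arccos ((1-ε) * Real.sqrt (u 0 + ε)) + I)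
        (nhdsWithin 0 (Set.Ioi 0)) (nhds I) := by
      have hcont : Continuous fun ε : ℝ => Real.arccos ((1-ε) * Real.sqrt (u 0 + ε)) + I :=
        (Real.continuous_arccos.comp ((continuous_const.sub continuous_id).mul
          (Real.continuous_sqrt.comp (continuous_const.add continuous_id)))).add continuous_const
      have h0 : Real.arccos ((1-(0:ℝ)) * Real.sqrt (u 0 + 0)) + I = I := by
        rw [hu0val]
        simp
      have := hcont.continuousAt (x := (0:ℝ))
      rw [ContinuousAt, h0] at this
      exact this.mono_left nhdsWithin_le_nhds
    have hev : ∀ᶠ ε in nhdsWithin 0 (Set.Ioi 0),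
        Real.arccos ((1-ε) * Real.sqrt (u T + ε))
          ≤ Real.arccos ((1-ε) * Real.sqrt (u 0 + ε)) + I := by
      filter_upwards [Ioo_mem_nhdsGT_of_mem (by norm_num : (0:ℝ) ∈ Set.Ico (0:ℝ) 1)]
        with ε hε
      exact hεbound ε hε
    exact le_of_tendsto_of_tendsto hF hG hev
  rw [hcdef] at hgoal
  exact hgoal
end
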